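/- arXiv:2007.13819 — 4 statements merged into one kernel-verified Lean document; each statement's English description precedes it below -/
import Mathlib

section
/- Let D ≥ 1 and let H be a D×D nonnegative, column stochastic matrix satisfying b_i H_{i,j} = b_j H_{j,i} for a positive probability vector b, with support graph connected. Partition {1,…,N} into D nonempty blocks M^(1),…,M^(D) with block map d(·), and let v^(i) > 0 satisfy Σ_{i∈M^(d)} v^(i) = 1 for every block d. Define the N×N matrix Z by Z_{i,j} = H_{d(i),d(j)} v^(i). Then the nonzero eigenvalues of Z coincide with the nonzero eigenvalues of H, counted with multiplicity, and all remaining eigenvalues of Z are zero; equivalently, the rank of Z equals the rank of H and there is a bijection between eigenpairs of H with nonzero eigenvalue and eigenpairs of Z with nonzero eigenvalue, given by mapping an eigenvector y of H to the vector x with x_i = v^(i) y_{d(i)}. -/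
open Matrix Polynomial

lemma my_eval_charpoly {n : ℕ} (M : Matrix (Fin n) (Fin n) ℂ) (t : ℂ) :
    M.charpoly.eval t = (t • (1 : Matrix (Fin n) (Fin n) ℂ) - M).det := by
  rw [Matrix.charpoly, ← Polynomial.coe_evalRingHom, RingHom.map_det]
  congr 1
  ext i j
  by_cases h : i = j
  · subst h
    simp [Matrix.charmatrix_apply_eq, Matrix.one_apply]
  · simp [Matrix.charmatrix_apply_ne _ _ _ h, Matrix.one_apply, h]

/-- **Proposition 2 of the paper.**
The nonzero eigenvalues of the lifted matrix `Z` (`Z i j = H (d i) (d j) * v i`)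
coincide, with multiplicity, with the nonzero eigenvalues of `H` and all remaining
eigenvalues of `Z` are zero (expressed by the characteristic polynomial identity
`charpoly Z = X^(N−D) * charpoly H` over `ℂ`); equivalently the rank of `Z` equals
the rank of `H`, and there is a bijection between eigenpairs of `H` with nonzero
eigenvalue and those of `Z`, given by `y ↦ x` with `x i = v i * y (d i)`. -/
theorem stmt_1 {N D : ℕ} (hD : 1 ≤ D)
    (H : Matrix (Fin D) (Fin D) ℝ) (b : Fin D → ℝ)
    (hbpos : ∀ δ, 0 < b δ) (hbsum : ∑ δ, b δ = 1)
    (hHnn : ∀ i j, 0 ≤ H i j) (hHcol : ∀ j, ∑ i, H i j = 1)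
    (hHbal : ∀ i j, b i * H i j = b j * H j i)
    (hconn : (SimpleGraph.fromRel (fun i j : Fin D => 0 < H i j)).Connected)
    (d : Fin N → Fin D) (hd : Function.Surjective d)
    (v : Fin N → ℝ) (hv : ∀ i, 0 < v i)
    (hvsum : ∀ δ : Fin D, ∑ i ∈ Finset.univ.filter (fun i => d i = δ), v i = 1)
    (Z : Matrix (Fin N) (Fin N) ℝ) (hZ : ∀ i j, Z i j = H (d i) (d j) * v i) :
    ((Z.map (Complex.ofReal)).charpoly =
        Polynomial.X ^ (N - D) * (H.map (Complex.ofReal)).charpoly) ∧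
    Z.rank = H.rank ∧
    (∀ (μ : ℂ), μ ≠ 0 → ∀ y : Fin D → ℂ, y ≠ 0 →
      Matrix.mulVec (H.map (Complex.ofReal)) y = μ • y →
      (fun i : Fin N => (v i : ℂ) * y (d i)) ≠ 0 ∧
        Matrix.mulVec (Z.map (Complex.ofReal)) (fun i => (v i : ℂ) * y (d i)) =
          μ • fun i => (v i : ℂ) * y (d i)) ∧
    Function.Injective (fun (y : Fin D → ℂ) => fun i : Fin N => (v i : ℂ) * y (d i)) ∧
    (∀ (μ : ℂ), μ ≠ 0 → ∀ x : Fin N → ℂ, x ≠ 0 →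
      Matrix.mulVec (Z.map (Complex.ofReal)) x = μ • x →
      ∃ y : Fin D → ℂ, y ≠ 0 ∧ Matrix.mulVec (H.map (Complex.ofReal)) y = μ • y ∧
        x = fun i => (v i : ℂ) * y (d i)) := by
  have hDN : D ≤ N := by
    simpa using Fintype.card_le_of_surjective d hd
  set HC : Matrix (Fin D) (Fin D) ℂ := H.map Complex.ofReal with hHC
  set ZC : Matrix (Fin N) (Fin N) ℂ := Z.map Complex.ofReal with hZC
  set L : Matrix (Fin N) (Fin D) ℂ :=
    Matrix.of (fun i δ => if d i = δ then (v i : ℂ) else 0) with hL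
  set R : Matrix (Fin D) (Fin N) ℂ :=
    Matrix.of (fun δ j => if d j = δ then (1 : ℂ) else 0) with hR
  have hvne : ∀ i, (v i : ℂ) ≠ 0 := fun i =>
    Complex.ofReal_ne_zero.mpr (ne_of_gt (hv i))
  have hZLR : ZC = L * HC * R := by
    ext i j
    simp only [hZC, Matrix.map_apply, hZ, Matrix.mul_apply, hL, hR, hHC, Matrix.of_apply,
      ite_mul, mul_ite, zero_mul, mul_zero, mul_one, Finset.sum_ite_eq, Finset.mem_univ, if_true]
    push_cast
    ring
  have hRL : R * L = 1 := by
    ext δ ε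
    have h1 : (R * L) δ ε = ∑ j ∈ Finset.univ.filter (fun j => d j = δ), L j ε := by
      rw [Matrix.mul_apply, Finset.sum_filter]
      exact Finset.sum_congr rfl (fun j _ => by simp [hR, ite_mul])
    by_cases h : δ = ε
    · subst h
      rw [h1, Matrix.one_apply_eq]
      have h2 : ∀ j ∈ Finset.univ.filter (fun j => d j = δ), L j δ = (v j : ℂ) := by
        intro j hj
        simp only [Finset.mem_filter] at hj
        simp [hL, hj.2]
      rw [Finset.sum_congr rfl h2]
      rw [show (∑ j ∈ Finset.univ.filter (fun j => d j = δ), (v j : ℂ)) =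
        ((∑ j ∈ Finset.univ.filter (fun j => d j = δ), v j : ℝ) : ℂ) by push_cast; rfl, hvsum]
      norm_num
    · rw [h1, Matrix.one_apply_ne h]
      apply Finset.sum_eq_zero
      intro j hj
      simp only [Finset.mem_filter] at hj
      simp [hL, hj.2, h]
  -- L.mulVec y is the lift
  have hLmul : ∀ y : Fin D → ℂ, L.mulVec y = fun i => (v i : ℂ) * y (d i) := by
    intro y
    funext i
    simp [Matrix.mulVec, dotProduct, hL, ite_mul, Finset.sum_ite_eq]
  -- charpoly identity
  have hcp : ZC.charpoly = Polynomial.X ^ (N - D) * HC.charpoly := by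
    apply Polynomial.eq_of_infinite_eval_eq
    apply Set.Infinite.mono (s := {(0 : ℂ)}ᶜ)
    · intro t ht
      have ht0 : t ≠ 0 := ht
      simp only [Set.mem_setOf_eq, Polynomial.eval_mul, Polynomial.eval_pow, Polynomial.eval_X,
        my_eval_charpoly]
      have key : t • (1 : Matrix (Fin N) (Fin N) ℂ) - ZC
          = t • ((1 : Matrix (Fin N) (Fin N) ℂ) - L * (t⁻¹ • (HC * R))) := by
        rw [smul_sub, Matrix.mul_smul, smul_smul, mul_inv_cancel₀ ht0, one_smul, hZLR,
          Matrix.mul_assoc]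
      have key2 : t • (1 : Matrix (Fin D) (Fin D) ℂ) - HC
          = t • ((1 : Matrix (Fin D) (Fin D) ℂ) - t⁻¹ • HC) := by
        rw [smul_sub, smul_smul, mul_inv_cancel₀ ht0, one_smul]
      rw [key, key2, Matrix.det_smul, Matrix.det_smul, Matrix.det_one_sub_mul_comm,
        Matrix.smul_mul, Matrix.mul_assoc, hRL, Matrix.mul_one]
      rw [Fintype.card_fin, Fintype.card_fin]
      rw [show t ^ N = t ^ (N - D) * t ^ D by rw [← pow_add, Nat.sub_add_cancel hDN]]
      ring
    · exact Set.Finite.infinite_compl (Set.finite_singleton 0)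
  refine ⟨hcp, ?_, ?_, ?_, ?_⟩
  · -- rank
    set L₀ : Matrix (Fin N) (Fin D) ℝ :=
      Matrix.of (fun i δ => if d i = δ then v i else 0) with hL₀
    set R₀ : Matrix (Fin D) (Fin N) ℝ :=
      Matrix.of (fun δ j => if d j = δ then (1 : ℝ) else 0) with hR₀
    have hZLR₀ : Z = L₀ * H * R₀ := by
      ext i j
      simp only [hZ, Matrix.mul_apply, hL₀, hR₀, Matrix.of_apply, ite_mul, mul_ite, zero_mul,
        mul_zero, mul_one, Finset.sum_ite_eq, Finset.mem_univ, if_true]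
      ring
    have hRL₀ : R₀ * L₀ = 1 := by
      ext δ ε
      have h1 : (R₀ * L₀) δ ε = ∑ j ∈ Finset.univ.filter (fun j => d j = δ), L₀ j ε := by
        rw [Matrix.mul_apply, Finset.sum_filter]
        exact Finset.sum_congr rfl (fun j _ => by simp [hR₀, ite_mul])
      by_cases h : δ = ε
      · subst h
        rw [h1, Matrix.one_apply_eq]
        have h2 : ∀ j ∈ Finset.univ.filter (fun j => d j = δ), L₀ j δ = v j := by
          intro j hj
          simp only [Finset.mem_filter] at hj
          simp [hL₀, hj.2]
        rw [Finset.sum_congr rfl h2, hvsum]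
      · rw [h1, Matrix.one_apply_ne h]
        apply Finset.sum_eq_zero
        intro j hj
        simp only [Finset.mem_filter] at hj
        simp [hL₀, hj.2, h]
    have hHZ : H = R₀ * (Z * L₀) := by
      rw [hZLR₀, Matrix.mul_assoc, Matrix.mul_assoc, hRL₀, Matrix.mul_one, ← Matrix.mul_assoc,
        hRL₀, Matrix.one_mul]
    apply le_antisymm
    · rw [hZLR₀]
      exact le_trans (Matrix.rank_mul_le_left _ _) (Matrix.rank_mul_le_right _ _)
    · conv_lhs => rw [hHZ]
      exact le_trans (Matrix.rank_mul_le_right _ _) (Matrix.rank_mul_le_left _ _)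
  · -- forward eigenpairs
    intro μ hμ y hy hHy
    constructor
    · intro hx
      obtain ⟨δ, hδ⟩ := Function.ne_iff.mp hy
      obtain ⟨i, rfl⟩ := hd δ
      have := congrFun hx i
      simp only [Pi.zero_apply] at this
      exact hδ (by
        rcases mul_eq_zero.mp this with h | h
        · exact absurd h (hvne i)
        · exact h)
    · rw [← hLmul, hZLR, ← Matrix.mulVec_mulVec, ← Matrix.mulVec_mulVec,
        Matrix.mulVec_mulVec y R L, hRL, Matrix.one_mulVec, hHy, Matrix.mulVec_smul, hLmul]
  · -- injectivity
    intro y1 y2 h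
    funext δ
    obtain ⟨i, rfl⟩ := hd δ
    have := congrFun h i
    simp only at this
    exact mul_left_cancel₀ (hvne i) this
  · -- backward eigenpairs
    intro μ hμ x hx hZx
    set w : Fin D → ℂ := R.mulVec x with hw
    set y : Fin D → ℂ := μ⁻¹ • HC.mulVec w with hy
    have hxL : x = L.mulVec y := by
      have h1 : μ • x = L.mulVec (HC.mulVec w) := by
        rw [← hZx, hZLR, ← Matrix.mulVec_mulVec, ← Matrix.mulVec_mulVec]
      calc x = μ⁻¹ • (μ • x) := by rw [smul_smul, inv_mul_cancel₀ hμ, one_smul]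
        _ = μ⁻¹ • L.mulVec (HC.mulVec w) := by rw [h1]
        _ = L.mulVec y := by rw [hy, Matrix.mulVec_smul]
    have hwy : w = y := by
      rw [hw, hxL, Matrix.mulVec_mulVec, hRL, Matrix.one_mulVec]
    have hHy : HC.mulVec y = μ • y := by
      have h2 : HC.mulVec w = μ • y := by
        rw [hy, smul_smul, mul_inv_cancel₀ hμ, one_smul]
      conv_lhs => rw [← hwy]
      exact h2
    refine ⟨y, ?_, hHy, by rw [hxL, hLmul]⟩
    intro h0
    apply hx
    rw [hxL, h0, Matrix.mulVec_zero]
end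

section
/- Let x^(1),…,x^(N) ∈ ℝⁿ, let F : ℝⁿ → ℝ be differentiable, and let a ∈ ℝ^N have positive entries summing to 1 and p ∈ [0,1]^N. For each i, let g^(i) = θ_i · G_i, where θ_i is a Bernoulli(p_i) random variable, G_i is a random vector in ℝⁿ with E[G_i] = ∇F(x^(i)) and E‖G_i − ∇F(x^(i))‖² ≤ β‖∇F(x^(i))‖² + σ² for constants β ≥ 0, σ ≥ 0, θ_i is independent of G_i, and the pairs (θ_1,G_1),…,(θ_N,G_N) are mutually independent. Set 𝒢 = Σ_{i=1}^N a_i g^(i) and ℋ = Σ_{i=1}^N a_i ∇F(x^(i)). Then E‖𝒢 − ℋ‖² ≤ Σ_{i=1}^N a_i² [ (p_i(β−1)+1) ‖∇F(x^(i))‖² + p_i σ² ] + Σ_{l=1}^N Σ_{j≠l} a_l a_j (1−p_j)(1−p_l) ⟨∇F(x^(j)), ∇F(x^(l))⟩. -/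
open MeasureTheory ProbabilityTheory

lemma aux_integral_inner {n : ℕ} {Ω : Type} [MeasurableSpace Ω] {μ : Measure Ω}
    [IsProbabilityMeasure μ]
    {A B : Ω → EuclideanSpace ℝ (Fin n)} (hAi : Integrable A μ) (hBi : Integrable B μ)
    (hAB : IndepFun A B μ) :
    ∫ ω, (inner ℝ (A ω) (B ω) : ℝ) ∂μ = (inner ℝ (∫ ω, A ω ∂μ) (∫ ω, B ω ∂μ) : ℝ) := by
  have hA : ∀ k, Integrable (fun ω => A ω k) μ := fun k =>
    (EuclideanSpace.proj (𝕜 := ℝ) k).integrable_comp hAi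
  have hB : ∀ k, Integrable (fun ω => B ω k) μ := fun k =>
    (EuclideanSpace.proj (𝕜 := ℝ) k).integrable_comp hBi
  have hABk : ∀ k, IndepFun (fun ω => A ω k) (fun ω => B ω k) μ := fun k =>
    hAB.comp (EuclideanSpace.proj (𝕜 := ℝ) k).continuous.measurable
      (EuclideanSpace.proj (𝕜 := ℝ) k).continuous.measurable
  have hAmean : ∀ k, ∫ ω, A ω k ∂μ = (∫ ω, A ω ∂μ) k := fun k =>
    ((EuclideanSpace.proj (𝕜 := ℝ) k).integral_comp_comm hAi)
  have hBmean : ∀ k, ∫ ω, B ω k ∂μ = (∫ ω, B ω ∂μ) k := fun k =>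
    ((EuclideanSpace.proj (𝕜 := ℝ) k).integral_comp_comm hBi)
  simp_rw [PiLp.inner_apply, RCLike.inner_apply, conj_trivial]
  simp_rw [fun ω k => mul_comm (B ω k) (A ω k), fun k => mul_comm ((∫ ω, B ω ∂μ) k) ((∫ ω, A ω ∂μ) k)]
  rw [integral_finset_sum (f := fun k ω => A ω k * B ω k) _ fun k _ =>
    ((hABk k).integrable_mul (hA k) (hB k) : Integrable (fun ω => A ω k * B ω k) μ)]
  refine Finset.sum_congr rfl fun k _ => ?_
  rw [show (∫ ω, A ω k * B ω k ∂μ) = ∫ ω, ((fun ω => A ω k) * fun ω => B ω k) ω ∂μ from rfl,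
    (hABk k).integral_mul_eq_mul_integral (hA k).aestronglyMeasurable (hB k).aestronglyMeasurable, hAmean k, hBmean k]

lemma aux_integral_smul {n : ℕ} {Ω : Type} [MeasurableSpace Ω] {μ : Measure Ω}
    [IsProbabilityMeasure μ]
    {T : Ω → ℝ} {A : Ω → EuclideanSpace ℝ (Fin n)} (hT : Integrable T μ) (hA : Integrable A μ)
    (hTA : Integrable (fun ω => T ω • A ω) μ) (h : IndepFun T A μ) :
    ∫ ω, T ω • A ω ∂μ = (∫ ω, T ω ∂μ) • ∫ ω, A ω ∂μ := by
  refine PiLp.ext fun k => ?_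
  have hAk : Integrable (fun ω => A ω k) μ := (EuclideanSpace.proj (𝕜 := ℝ) k).integrable_comp hA
  have hk : IndepFun T (fun ω => A ω k) μ :=
    h.comp measurable_id (EuclideanSpace.proj (𝕜 := ℝ) k).continuous.measurable
  have h1 : (∫ ω, T ω • A ω ∂μ) k = ∫ ω, T ω * A ω k ∂μ :=
    ((EuclideanSpace.proj (𝕜 := ℝ) k).integral_comp_comm hTA).symm
  rw [h1, show (∫ ω, T ω * A ω k ∂μ) = ∫ ω, (T * fun ω => A ω k) ω ∂μ from rfl,
    hk.integral_mul_eq_mul_integral hT.aestronglyMeasurable hAk.aestronglyMeasurable,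
    show (∫ ω, A ω k ∂μ) = (∫ ω, A ω ∂μ) k from
      (EuclideanSpace.proj (𝕜 := ℝ) k).integral_comp_comm hA]
  rfl

set_option maxHeartbeats 2000000 in
/-- **Lemma 1 of the paper.**
Variance bound for the weighted average stochastic gradient
`𝒢 = ∑ i, a i • (θ i • G i)` around `ℋ = ∑ i, a i • ∇F(x i)` in MLL-SGD, where
`θ i` is Bernoulli(`p i`), `E[G i] = ∇F(x i)`,
`E‖G i − ∇F(x i)‖² ≤ β‖∇F(x i)‖² + σ²`, `θ i` is independent of `G i`, and the pairs
`(θ i, G i)` are mutually independent: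
`E‖𝒢 − ℋ‖² ≤ ∑ i a i² [(p i (β−1)+1)‖∇F(x i)‖² + p i σ²]
  + ∑ l ∑_{j ≠ l} a l a j (1−p j)(1−p l) ⟨∇F(x j), ∇F(x l)⟩`. -/
theorem stmt_4 {n N : ℕ} {Ω : Type} [MeasurableSpace Ω]
    (μ : Measure Ω) [IsProbabilityMeasure μ]
    (F : EuclideanSpace ℝ (Fin n) → ℝ) (hF : Differentiable ℝ F)
    (x : Fin N → EuclideanSpace ℝ (Fin n))
    (a p : Fin N → ℝ) (hapos : ∀ i, 0 < a i) (hasum : ∑ i, a i = 1)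
    (hp : ∀ i, p i ∈ Set.Icc (0 : ℝ) 1)
    (β σ : ℝ) (hβ : 0 ≤ β) (hσ : 0 ≤ σ)
    (θ : Fin N → Ω → ℝ) (G : Fin N → Ω → EuclideanSpace ℝ (Fin n))
    (hθmeas : ∀ i, Measurable (θ i)) (hGmeas : ∀ i, Measurable (G i))
    (hθ01 : ∀ i ω, θ i ω = 0 ∨ θ i ω = 1)
    (hθmean : ∀ i, ∫ ω, θ i ω ∂μ = p i)
    (hGint : ∀ i, Integrable (G i) μ)
    (hGmean : ∀ i, ∫ ω, G i ω ∂μ = gradient F (x i))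
    (hGsqint : ∀ i, Integrable (fun ω => ‖G i ω - gradient F (x i)‖ ^ 2) μ)
    (hGvar : ∀ i, ∫ ω, ‖G i ω - gradient F (x i)‖ ^ 2 ∂μ ≤
      β * ‖gradient F (x i)‖ ^ 2 + σ ^ 2)
    (hpair : ∀ i, IndepFun (θ i) (G i) μ)
    (hindep : iIndepFun (fun i ω => (θ i ω, G i ω)) μ) :
    ∫ ω, ‖(∑ i, a i • (θ i ω • G i ω)) - ∑ i, a i • gradient F (x i)‖ ^ 2 ∂μ ≤
      (∑ i, (a i) ^ 2 *
        ((p i * (β - 1) + 1) * ‖gradient F (x i)‖ ^ 2 + p i * σ ^ 2))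
      + ∑ l, ∑ j ∈ Finset.univ.filter (fun j => j ≠ l),
          a l * a j * (1 - p j) * (1 - p l) *
            (inner ℝ (gradient F (x j)) (gradient F (x l)) : ℝ) := by
  classical
  set h : Fin N → EuclideanSpace ℝ (Fin n) := fun i => gradient F (x i) with hh
  set Y : Fin N → Ω → EuclideanSpace ℝ (Fin n) := fun i ω => θ i ω • G i ω - h i with hYdef
  -- basic facts about θ
  have hGsqint' : ∀ i, Integrable (fun ω => ‖G i ω - h i‖ ^ 2) μ := hGsqint
  have hGvar' : ∀ i, ∫ ω, ‖G i ω - h i‖ ^ 2 ∂μ ≤ β * ‖h i‖ ^ 2 + σ ^ 2 := hGvar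
  have hGmean' : ∀ i, ∫ ω, G i ω ∂μ = h i := hGmean
  have hθ0 : ∀ i ω, 0 ≤ θ i ω := fun i ω => by rcases hθ01 i ω with h' | h' <;> simp [h']
  have hθ1 : ∀ i ω, θ i ω ≤ 1 := fun i ω => by rcases hθ01 i ω with h' | h' <;> simp [h']
  have hθint : ∀ i, Integrable (θ i) μ := fun i => by
    refine Integrable.mono' (integrable_const 1) (hθmeas i).aestronglyMeasurable ?_
    exact Filter.Eventually.of_forall fun ω => by
      rw [Real.norm_eq_abs, abs_of_nonneg (hθ0 i ω)]; exact hθ1 i ω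
  -- integrability facts
  have hθGint : ∀ i, Integrable (fun ω => θ i ω • G i ω) μ := fun i => by
    refine Integrable.mono' (hGint i).norm
      ((hθmeas i).smul (hGmeas i)).aestronglyMeasurable ?_
    refine Filter.Eventually.of_forall fun ω => ?_
    rw [norm_smul, Real.norm_eq_abs, abs_of_nonneg (hθ0 i ω)]
    nlinarith [hθ1 i ω, hθ0 i ω, norm_nonneg (G i ω)]
  have hYmeas : ∀ i, Measurable (Y i) := fun i =>
    ((hθmeas i).smul (hGmeas i)).sub measurable_const
  have hYint : ∀ i, Integrable (Y i) μ := fun i => (hθGint i).sub (integrable_const _)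
  have hGnsq : ∀ i, Integrable (fun ω => ‖G i ω‖ ^ 2) μ := fun i => by
    refine Integrable.mono' (((hGsqint' i).const_mul 2).add (integrable_const (2 * ‖h i‖ ^ 2)))
      ((hGmeas i).norm.pow_const 2).aestronglyMeasurable ?_
    refine Filter.Eventually.of_forall fun ω => ?_
    rw [Real.norm_eq_abs, abs_of_nonneg (by positivity)]
    have h1 : ‖G i ω‖ ≤ ‖G i ω - h i‖ + ‖h i‖ := by
      have := norm_add_le (G i ω - h i) (h i); rwa [sub_add_cancel] at this
    simp only [Pi.add_apply]
    have h2 := mul_self_le_mul_self (norm_nonneg (G i ω)) h1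
    nlinarith [sq_nonneg (‖G i ω - h i‖ - ‖h i‖)]
  have hYnsq : ∀ i, Integrable (fun ω => ‖Y i ω‖ ^ 2) μ := fun i => by
    refine Integrable.mono' (((hGnsq i).const_mul 2).add (integrable_const (2 * ‖h i‖ ^ 2)))
      ((hYmeas i).norm.pow_const 2).aestronglyMeasurable ?_
    refine Filter.Eventually.of_forall fun ω => ?_
    rw [Real.norm_eq_abs, abs_of_nonneg (by positivity)]
    have h1 : ‖Y i ω‖ ≤ ‖θ i ω • G i ω‖ + ‖h i‖ := norm_sub_le _ _
    have h2 : ‖θ i ω • G i ω‖ ≤ ‖G i ω‖ := by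
      rw [norm_smul, Real.norm_eq_abs, abs_of_nonneg (hθ0 i ω)]
      nlinarith [hθ1 i ω, hθ0 i ω, norm_nonneg (G i ω)]
    simp only [Pi.add_apply]
    have h3 : ‖Y i ω‖ ≤ ‖G i ω‖ + ‖h i‖ := h1.trans (by linarith)
    have h4 := mul_self_le_mul_self (norm_nonneg (Y i ω)) h3
    nlinarith [sq_nonneg (‖G i ω‖ - ‖h i‖)]
  have hinner : ∀ i j, Integrable (fun ω => (inner ℝ (Y i ω) (Y j ω) : ℝ)) μ := fun i j => by
    refine Integrable.mono' ((hYnsq i).add (hYnsq j))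
      ?_ (Filter.Eventually.of_forall fun ω => ?_)
    · exact Measurable.aestronglyMeasurable <| Measurable.inner (hYmeas i) (hYmeas j)
    · rw [Real.norm_eq_abs]
      have := abs_real_inner_le_norm (Y i ω) (Y j ω)
      simp only [Pi.add_apply]
      nlinarith [norm_nonneg (Y i ω), norm_nonneg (Y j ω), sq_nonneg (‖Y i ω‖ - ‖Y j ω‖)]
  -- pointwise expansion of the squared norm
  have key : ∀ ω, ‖(∑ i, a i • (θ i ω • G i ω)) - ∑ i, a i • h i‖ ^ 2 =
      ∑ i, ∑ j, (a i * a j) * (inner ℝ (Y i ω) (Y j ω) : ℝ) := by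
    intro ω
    have hsum : (∑ i, a i • (θ i ω • G i ω)) - ∑ i, a i • h i = ∑ i, a i • Y i ω := by
      rw [← Finset.sum_sub_distrib]
      exact Finset.sum_congr rfl fun i _ => by rw [← smul_sub]
    rw [hsum, ← real_inner_self_eq_norm_sq]
    simp only [sum_inner, inner_sum, real_inner_smul_left, real_inner_smul_right]
    exact Finset.sum_congr rfl fun i _ => Finset.sum_congr rfl fun j _ => by
      rw [real_inner_comm (Y j ω) (Y i ω)]; ring
  -- exchange integral and sums
  have step1 : ∫ ω, ‖(∑ i, a i • (θ i ω • G i ω)) - ∑ i, a i • h i‖ ^ 2 ∂μ =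
      ∑ i, ∑ j, (a i * a j) * ∫ ω, (inner ℝ (Y i ω) (Y j ω) : ℝ) ∂μ := by
    simp_rw [key]
    rw [integral_finset_sum _ fun i _ =>
      (integrable_finset_sum _ fun j _ => ((hinner i j).const_mul _))]
    refine Finset.sum_congr rfl fun i _ => ?_
    rw [integral_finset_sum _ fun j _ => ((hinner i j).const_mul _)]
    exact Finset.sum_congr rfl fun j _ => integral_const_mul _ _
  -- mean of Y i
  have hθGmean : ∀ i, ∫ ω, θ i ω • G i ω ∂μ = p i • h i := fun i => by
    rw [aux_integral_smul (hθint i) (hGint i) (hθGint i) (hpair i), hθmean i, hGmean' i]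
  have hYmean : ∀ i, ∫ ω, Y i ω ∂μ = (p i - 1) • h i := fun i => by
    rw [hYdef]
    rw [integral_sub (hθGint i) (integrable_const _), hθGmean i, integral_const]
    simp [sub_smul]
  -- off-diagonal terms
  have hoff : ∀ i j, i ≠ j → ∫ ω, (inner ℝ (Y i ω) (Y j ω) : ℝ) ∂μ =
      (1 - p i) * (1 - p j) * (inner ℝ (h i) (h j) : ℝ) := by
    intro i j hij
    have hYind : IndepFun (Y i) (Y j) μ := by
      have := hindep.indepFun hij
      have h1 : Measurable (fun q : ℝ × EuclideanSpace ℝ (Fin n) => q.1 • q.2 - h i) :=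
        (measurable_fst.smul measurable_snd).sub measurable_const
      have h2 : Measurable (fun q : ℝ × EuclideanSpace ℝ (Fin n) => q.1 • q.2 - h j) :=
        (measurable_fst.smul measurable_snd).sub measurable_const
      exact this.comp h1 h2
    rw [aux_integral_inner (hYint i) (hYint j) hYind, hYmean i, hYmean j,
      real_inner_smul_left, real_inner_smul_right]
    ring
  -- diagonal terms
  have hdiag : ∀ i, ∫ ω, (inner ℝ (Y i ω) (Y i ω) : ℝ) ∂μ ≤
      (p i * (β - 1) + 1) * ‖h i‖ ^ 2 + p i * σ ^ 2 := by
    intro i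
    obtain ⟨hp0, hp1⟩ := hp i
    -- pointwise expansion
    have hpt : ∀ ω, (inner ℝ (Y i ω) (Y i ω) : ℝ) =
        θ i ω * ‖G i ω‖ ^ 2 - 2 * (θ i ω * (inner ℝ (G i ω) (h i) : ℝ)) + ‖h i‖ ^ 2 := by
      intro ω
      rcases hθ01 i ω with h0 | h1
      · simp only [hYdef, h0, zero_smul, zero_sub, inner_neg_neg,
          real_inner_self_eq_norm_sq, zero_mul, mul_zero, sub_zero]
        ring
      · simp only [hYdef, h1, one_smul, one_mul]
        rw [real_inner_self_eq_norm_sq]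
        rw [show G i ω - h i = G i ω + (-1 : ℝ) • h i by simp [sub_eq_add_neg]]
        rw [norm_add_sq_real, real_inner_smul_right, norm_smul]
        simp; ring
    -- integrability of pieces
    have hGh_int : Integrable (fun ω => (inner ℝ (G i ω) (h i) : ℝ)) μ := by
      refine Integrable.mono' ((hGint i).norm.mul_const ‖h i‖)
        (Measurable.aestronglyMeasurable <| (hGmeas i).inner measurable_const) ?_
      refine Filter.Eventually.of_forall fun ω => ?_
      rw [Real.norm_eq_abs]
      exact abs_real_inner_le_norm _ _
    have hθGh_ind : IndepFun (θ i) (fun ω => (inner ℝ (G i ω) (h i) : ℝ)) μ :=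
      (hpair i).comp measurable_id
        ((measurable_id.inner measurable_const :
          Measurable fun v : EuclideanSpace ℝ (Fin n) => (inner ℝ v (h i) : ℝ)))
    have hθGh_int : Integrable (fun ω => θ i ω * (inner ℝ (G i ω) (h i) : ℝ)) μ :=
      hθGh_ind.integrable_mul (hθint i) hGh_int
    have hθnsq_ind : IndepFun (θ i) (fun ω => ‖G i ω‖ ^ 2) μ :=
      (hpair i).comp measurable_id
        ((measurable_norm.pow_const 2 :
          Measurable fun v : EuclideanSpace ℝ (Fin n) => ‖v‖ ^ 2))
    have hθnsq_int : Integrable (fun ω => θ i ω * ‖G i ω‖ ^ 2) μ :=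
      hθnsq_ind.integrable_mul (hθint i) (hGnsq i)
    -- mean of ⟪G, h⟫
    have hGh_mean : ∫ ω, (inner ℝ (G i ω) (h i) : ℝ) ∂μ = ‖h i‖ ^ 2 := by
      have e : ∀ ω, (inner ℝ (G i ω) (h i) : ℝ) = (innerSL ℝ (h i)) (G i ω) := fun ω => by
        rw [innerSL_apply_apply]; exact real_inner_comm _ _
      simp_rw [e]
      rw [ContinuousLinearMap.integral_comp_comm _ (hGint i), hGmean' i, innerSL_apply_apply,
        real_inner_self_eq_norm_sq]
    -- mean of ‖G‖²
    have hGnsq_mean : ∫ ω, ‖G i ω‖ ^ 2 ∂μ ≤ (β + 1) * ‖h i‖ ^ 2 + σ ^ 2 := by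
      have e : ∀ ω, ‖G i ω‖ ^ 2 =
          ‖G i ω - h i‖ ^ 2 + 2 * (inner ℝ (G i ω) (h i) : ℝ) - ‖h i‖ ^ 2 := by
        intro ω
        have := norm_add_sq_real (G i ω - h i) (h i)
        simp only [sub_add_cancel] at this
        rw [this, inner_sub_left, real_inner_self_eq_norm_sq]
        ring
      simp_rw [e]
      have I1 : Integrable (fun ω => ‖G i ω - h i‖ ^ 2 + 2 * (inner ℝ (G i ω) (h i) : ℝ)) μ :=
        (hGsqint' i).add (hGh_int.const_mul 2)
      rw [integral_sub I1 (integrable_const _),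
        integral_add (hGsqint' i) (hGh_int.const_mul 2), integral_const_mul, hGh_mean,
        integral_const]
      have := hGvar' i
      simp only [probReal_univ, measure_univ, ENNReal.toReal_one, smul_eq_mul, one_mul]
      nlinarith
    -- integrate the pointwise expansion
    have hint_eq : ∫ ω, (inner ℝ (Y i ω) (Y i ω) : ℝ) ∂μ =
        p i * (∫ ω, ‖G i ω‖ ^ 2 ∂μ) - 2 * (p i * ‖h i‖ ^ 2) + ‖h i‖ ^ 2 := by
      simp_rw [hpt]
      have I2 : Integrable (fun ω => θ i ω * ‖G i ω‖ ^ 2 -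
          2 * (θ i ω * (inner ℝ (G i ω) (h i) : ℝ))) μ :=
        hθnsq_int.sub (hθGh_int.const_mul 2)
      rw [integral_add I2 (integrable_const _),
        integral_sub hθnsq_int (hθGh_int.const_mul 2), integral_const_mul, integral_const]
      have e1 : ∫ ω, θ i ω * ‖G i ω‖ ^ 2 ∂μ = p i * ∫ ω, ‖G i ω‖ ^ 2 ∂μ := by
        rw [show (∫ ω, θ i ω * ‖G i ω‖ ^ 2 ∂μ) =
            ∫ ω, (θ i * fun ω => ‖G i ω‖ ^ 2) ω ∂μ from rfl,
          hθnsq_ind.integral_mul_eq_mul_integral (hθint i).aestronglyMeasurable (hGnsq i).aestronglyMeasurable, hθmean i]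
      have e2 : ∫ ω, θ i ω * (inner ℝ (G i ω) (h i) : ℝ) ∂μ = p i * ‖h i‖ ^ 2 := by
        rw [show (∫ ω, θ i ω * (inner ℝ (G i ω) (h i) : ℝ) ∂μ) =
            ∫ ω, (θ i * fun ω => (inner ℝ (G i ω) (h i) : ℝ)) ω ∂μ from rfl,
          hθGh_ind.integral_mul_eq_mul_integral (hθint i).aestronglyMeasurable hGh_int.aestronglyMeasurable, hθmean i, hGh_mean]
      rw [e1, e2]
      simp [measure_univ]
    rw [hint_eq]
    nlinarith [sq_nonneg (‖h i‖), sq_nonneg σ]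
  -- assemble
  show ∫ ω, ‖(∑ i, a i • (θ i ω • G i ω)) - ∑ i, a i • h i‖ ^ 2 ∂μ ≤
      (∑ i, (a i) ^ 2 * ((p i * (β - 1) + 1) * ‖h i‖ ^ 2 + p i * σ ^ 2))
      + ∑ l, ∑ j ∈ Finset.univ.filter (fun j => j ≠ l),
          a l * a j * (1 - p j) * (1 - p l) * (inner ℝ (h j) (h l) : ℝ)
  rw [step1]
  have hsplit : ∀ l : Fin N,
      (∑ j, (a l * a j) * ∫ ω, (inner ℝ (Y l ω) (Y j ω) : ℝ) ∂μ) ≤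
      (a l) ^ 2 * ((p l * (β - 1) + 1) * ‖h l‖ ^ 2 + p l * σ ^ 2) +
      ∑ j ∈ Finset.univ.filter (fun j => j ≠ l),
        a l * a j * (1 - p j) * (1 - p l) * (inner ℝ (h j) (h l) : ℝ) := by
    intro l
    rw [← Finset.add_sum_erase _ _ (Finset.mem_univ l), Finset.filter_ne']
    have hdterm : (a l * a l) * ∫ ω, (inner ℝ (Y l ω) (Y l ω) : ℝ) ∂μ ≤
        (a l) ^ 2 * ((p l * (β - 1) + 1) * ‖h l‖ ^ 2 + p l * σ ^ 2) := by
      rw [← sq]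
      exact mul_le_mul_of_nonneg_left (hdiag l) (sq_nonneg _)
    have hoterm : ∀ j ∈ Finset.univ.erase l,
        (a l * a j) * ∫ ω, (inner ℝ (Y l ω) (Y j ω) : ℝ) ∂μ =
        a l * a j * (1 - p j) * (1 - p l) * (inner ℝ (h j) (h l) : ℝ) := by
      intro j hj
      rw [hoff l j (Finset.ne_of_mem_erase hj).symm]
      rw [real_inner_comm (h l) (h j)]
      ring
    exact add_le_add hdterm (le_of_eq (Finset.sum_congr rfl hoterm))
  calc ∑ l, ∑ j, (a l * a j) * ∫ ω, (inner ℝ (Y l ω) (Y j ω) : ℝ) ∂μ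
      ≤ ∑ l, ((a l) ^ 2 * ((p l * (β - 1) + 1) * ‖h l‖ ^ 2 + p l * σ ^ 2) +
        ∑ j ∈ Finset.univ.filter (fun j => j ≠ l),
          a l * a j * (1 - p j) * (1 - p l) * (inner ℝ (h j) (h l) : ℝ)) :=
        Finset.sum_le_sum fun l _ => hsplit l
    _ = _ := by rw [Finset.sum_add_distrib]
end

section
/- Let x^(1),…,x^(N) ∈ ℝⁿ, let F : ℝⁿ → ℝ be differentiable, and let a ∈ ℝ^N have positive entries summing to 1 and p ∈ [0,1]^N. For each i, let g^(i) = θ_i · G_i, where θ_i is Bernoulli(p_i), G_i is a random vector with E[G_i] = ∇F(x^(i)) and E‖G_i − ∇F(x^(i))‖² ≤ β‖∇F(x^(i))‖² + σ², θ_i is independent of G_i, and the pairs (θ_i, G_i) are mutually independent across i. Set 𝒢 = Σ_{i=1}^N a_i g^(i). Then E‖𝒢‖² ≤ Σ_{i=1}^N [ a_i²(p_i(β+1) − p_i²) + a_i p_i² ] ‖∇F(x^(i))‖² + σ² Σ_{i=1}^N a_i² p_i. -/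
open MeasureTheory ProbabilityTheory

private lemma coord_abs_le_norm {n : ℕ} (y : EuclideanSpace ℝ (Fin n)) (k : Fin n) :
    |y k| ≤ ‖y‖ := by
  rw [EuclideanSpace.norm_eq,
    show |y k| = Real.sqrt (‖y k‖ ^ 2) by rw [Real.sqrt_sq_eq_abs]; simp]
  apply Real.sqrt_le_sqrt
  exact Finset.single_le_sum (f := fun i => ‖y i‖ ^ 2) (fun i _ => by positivity)
    (Finset.mem_univ k)

set_option maxHeartbeats 1000000 in
/-- **Lemma 2 of the paper.**
Second-moment bound for the weighted average stochastic gradient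
`𝒢 = ∑ i, a i • (θ i • G i)` in MLL-SGD, with `θ i` Bernoulli(`p i`) independent of
`G i`, `E[G i] = ∇F(x i)`, `E‖G i − ∇F(x i)‖² ≤ β‖∇F(x i)‖² + σ²`, and the pairs
`(θ i, G i)` mutually independent:
`E‖𝒢‖² ≤ ∑ i [a i²(p i(β+1) − p i²) + a i p i²]‖∇F(x i)‖² + σ² ∑ i a i² p i`. -/
theorem stmt_5 {n N : ℕ} {Ω : Type} [MeasurableSpace Ω]
    (μ : Measure Ω) [IsProbabilityMeasure μ]
    (F : EuclideanSpace ℝ (Fin n) → ℝ) (hF : Differentiable ℝ F)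
    (x : Fin N → EuclideanSpace ℝ (Fin n))
    (a p : Fin N → ℝ) (hapos : ∀ i, 0 < a i) (hasum : ∑ i, a i = 1)
    (hp : ∀ i, p i ∈ Set.Icc (0 : ℝ) 1)
    (β σ : ℝ) (hβ : 0 ≤ β) (hσ : 0 ≤ σ)
    (θ : Fin N → Ω → ℝ) (G : Fin N → Ω → EuclideanSpace ℝ (Fin n))
    (hθmeas : ∀ i, Measurable (θ i)) (hGmeas : ∀ i, Measurable (G i))
    (hθ01 : ∀ i ω, θ i ω = 0 ∨ θ i ω = 1)
    (hθmean : ∀ i, ∫ ω, θ i ω ∂μ = p i)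
    (hGint : ∀ i, Integrable (G i) μ)
    (hGmean : ∀ i, ∫ ω, G i ω ∂μ = gradient F (x i))
    (hGsqint : ∀ i, Integrable (fun ω => ‖G i ω - gradient F (x i)‖ ^ 2) μ)
    (hGvar : ∀ i, ∫ ω, ‖G i ω - gradient F (x i)‖ ^ 2 ∂μ ≤
      β * ‖gradient F (x i)‖ ^ 2 + σ ^ 2)
    (hpair : ∀ i, IndepFun (θ i) (G i) μ)
    (hindep : iIndepFun (fun i ω => (θ i ω, G i ω)) μ) :
    ∫ ω, ‖∑ i, a i • (θ i ω • G i ω)‖ ^ 2 ∂μ ≤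
      (∑ i, ((a i) ^ 2 * (p i * (β + 1) - (p i) ^ 2) + a i * (p i) ^ 2) *
        ‖gradient F (x i)‖ ^ 2)
      + σ ^ 2 * ∑ i, (a i) ^ 2 * p i := by
  classical
  set v : Fin N → EuclideanSpace ℝ (Fin n) := fun i => gradient F (x i) with hv
  set g : Fin N → Ω → EuclideanSpace ℝ (Fin n) := fun i ω => θ i ω • G i ω with hg
  have hGsqint' : ∀ i, Integrable (fun ω => ‖G i ω - v i‖ ^ 2) μ := hGsqint
  have hGvar' : ∀ i, ∫ ω, ‖G i ω - v i‖ ^ 2 ∂μ ≤ β * ‖v i‖ ^ 2 + σ ^ 2 := hGvar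
  have hGmean' : ∀ i, ∫ ω, G i ω ∂μ = v i := hGmean
  show ∫ ω, ‖∑ i, a i • g i ω‖ ^ 2 ∂μ ≤
      (∑ i, ((a i) ^ 2 * (p i * (β + 1) - (p i) ^ 2) + a i * (p i) ^ 2) * ‖v i‖ ^ 2)
      + σ ^ 2 * ∑ i, (a i) ^ 2 * p i
  have hθabs : ∀ i ω, |θ i ω| ≤ 1 := by
    intro i ω; rcases hθ01 i ω with h | h <;> simp [h]
  have hθnn : ∀ i ω, 0 ≤ θ i ω := by
    intro i ω; rcases hθ01 i ω with h | h <;> simp [h]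
  have hθsq : ∀ i ω, θ i ω ^ 2 = θ i ω := by
    intro i ω; rcases hθ01 i ω with h | h <;> simp [h]
  have hgmeas : ∀ i, Measurable (g i) := fun i => (hθmeas i).smul (hGmeas i)
  have hgnorm : ∀ i ω, ‖g i ω‖ ≤ ‖G i ω‖ := by
    intro i ω
    rw [hg, norm_smul, Real.norm_eq_abs]
    exact mul_le_of_le_one_left (norm_nonneg _) (hθabs i ω)
  -- integrability of ‖G i‖²
  have hGnsq : ∀ i, Integrable (fun ω => ‖G i ω‖ ^ 2) μ := by
    intro i
    have hbint : Integrable (fun ω => 2 * ‖G i ω - v i‖ ^ 2 + 2 * ‖v i‖ ^ 2) μ :=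
      ((hGsqint' i).const_mul 2).add (integrable_const _)
    refine hbint.mono' ((hGmeas i).norm.pow_const 2).aestronglyMeasurable ?_
    filter_upwards with ω
    rw [Real.norm_of_nonneg (by positivity)]
    have h1 : ‖G i ω‖ ≤ ‖G i ω - v i‖ + ‖v i‖ := by
      have := norm_add_le (G i ω - v i) (v i)
      simpa using this
    nlinarith [norm_nonneg (G i ω - v i), norm_nonneg (v i), norm_nonneg (G i ω),
      sq_nonneg (‖G i ω - v i‖ - ‖v i‖)]
  have hgint : ∀ i, Integrable (g i) μ := by
    intro i
    refine (hGint i).norm.mono' (hgmeas i).aestronglyMeasurable ?_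
    filter_upwards with ω
    simpa using hgnorm i ω
  have hgnsq : ∀ i, Integrable (fun ω => ‖g i ω‖ ^ 2) μ := by
    intro i
    refine (hGnsq i).mono' ((hgmeas i).norm.pow_const 2).aestronglyMeasurable ?_
    filter_upwards with ω
    rw [Real.norm_of_nonneg (by positivity)]
    exact pow_le_pow_left₀ (norm_nonneg _) (hgnorm i ω) 2
  -- integrability of inner products
  have hginnerint : ∀ i j, Integrable (fun ω => (inner ℝ (g i ω) (g j ω) : ℝ)) μ := by
    intro i j
    have hbint : Integrable (fun ω => (1/2 : ℝ) * (‖G i ω‖ ^ 2 + ‖G j ω‖ ^ 2)) μ :=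
      ((hGnsq i).add (hGnsq j)).const_mul (1/2 : ℝ)
    refine hbint.mono' ((hgmeas i).inner (hgmeas j)).aestronglyMeasurable ?_
    filter_upwards with ω
    rw [Real.norm_eq_abs]
    have h1 : |(inner ℝ (g i ω) (g j ω) : ℝ)| ≤ ‖g i ω‖ * ‖g j ω‖ := abs_real_inner_le_norm _ _
    have h2 : ‖g i ω‖ * ‖g j ω‖ ≤ ‖G i ω‖ * ‖G j ω‖ :=
      mul_le_mul (hgnorm i ω) (hgnorm j ω) (norm_nonneg _) (norm_nonneg _)
    nlinarith [norm_nonneg (G i ω), norm_nonneg (G j ω), sq_nonneg (‖G i ω‖ - ‖G j ω‖)]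
  -- coordinate means
  have hmcoord : ∀ (k : Fin n), Measurable (fun y : EuclideanSpace ℝ (Fin n) => y k) :=
    fun k => (EuclideanSpace.proj (𝕜 := ℝ) k).continuous.measurable
  have hGcoordmean : ∀ i (k : Fin n), ∫ ω, G i ω k ∂μ = v i k := by
    intro i k
    have := (EuclideanSpace.proj (𝕜 := ℝ) k).integral_comp_comm (hGint i)
    simp only [EuclideanSpace.proj] at this
    rw [show (fun ω => G i ω k) = fun ω => EuclideanSpace.proj (𝕜 := ℝ) k (G i ω) from rfl]
    rw [(EuclideanSpace.proj (𝕜 := ℝ) k).integral_comp_comm (hGint i), hGmean i]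
    rfl
  have hgcoord : ∀ i (k : Fin n), ∫ ω, θ i ω * G i ω k ∂μ = p i * v i k := by
    intro i k
    have hI : IndepFun (θ i) (fun ω => G i ω k) μ :=
      (hpair i).comp measurable_id (hmcoord k)
    have := hI.integral_mul_eq_mul_integral (hθmeas i).aestronglyMeasurable
      ((hmcoord k).comp (hGmeas i)).aestronglyMeasurable
    rw [show (fun ω => θ i ω * G i ω k) = (θ i) * (fun ω => G i ω k) from rfl, this,
      hθmean i, hGcoordmean i k]
  -- coordinate products integrable
  have hgcoordint : ∀ i j (k : Fin n),
      Integrable (fun ω => (θ i ω * G i ω k) * (θ j ω * G j ω k)) μ := by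
    intro i j k
    have hbint : Integrable (fun ω => (1/2 : ℝ) * (‖G i ω‖ ^ 2 + ‖G j ω‖ ^ 2)) μ :=
      ((hGnsq i).add (hGnsq j)).const_mul (1/2 : ℝ)
    refine hbint.mono'
      (((hθmeas i).mul ((hmcoord k).comp (hGmeas i))).mul
        ((hθmeas j).mul ((hmcoord k).comp (hGmeas j)))).aestronglyMeasurable ?_
    filter_upwards with ω
    rw [Real.norm_eq_abs, abs_mul]
    have hik : |θ i ω * G i ω k| ≤ ‖G i ω‖ := by
      rw [abs_mul]
      calc |θ i ω| * |G i ω k| ≤ 1 * ‖G i ω‖ :=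
            mul_le_mul (hθabs i ω) (coord_abs_le_norm _ k) (abs_nonneg _) zero_le_one
        _ = ‖G i ω‖ := one_mul _
    have hjk : |θ j ω * G j ω k| ≤ ‖G j ω‖ := by
      rw [abs_mul]
      calc |θ j ω| * |G j ω k| ≤ 1 * ‖G j ω‖ :=
            mul_le_mul (hθabs j ω) (coord_abs_le_norm _ k) (abs_nonneg _) zero_le_one
        _ = ‖G j ω‖ := one_mul _
    have := mul_le_mul hik hjk (abs_nonneg _) (norm_nonneg _)
    nlinarith [norm_nonneg (G i ω), norm_nonneg (G j ω), sq_nonneg (‖G i ω‖ - ‖G j ω‖),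
      abs_nonneg (θ i ω * G i ω k), abs_nonneg (θ j ω * G j ω k)]
  -- off-diagonal terms
  have hoff : ∀ i j, i ≠ j →
      ∫ ω, (inner ℝ (g i ω) (g j ω) : ℝ) ∂μ = (p i * p j) * inner ℝ (v i) (v j) := by
    intro i j hij
    have hpt : (fun ω => (inner ℝ (g i ω) (g j ω) : ℝ))
        = fun ω => ∑ k, (θ i ω * G i ω k) * (θ j ω * G j ω k) := by
      funext ω
      rw [hg, PiLp.inner_apply]
      refine Finset.sum_congr rfl fun k _ => ?_
      simp only [RCLike.inner_apply, conj_trivial, PiLp.smul_apply, smul_eq_mul]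
      ring
    rw [hpt, integral_finset_sum _ fun k _ => hgcoordint i j k]
    have hcoord : ∀ k : Fin n, ∫ ω, (θ i ω * G i ω k) * (θ j ω * G j ω k) ∂μ
        = (p i * v i k) * (p j * v j k) := by
      intro k
      have hI : IndepFun (fun ω => θ i ω * G i ω k) (fun ω => θ j ω * G j ω k) μ := by
        have hm : Measurable (fun q : ℝ × EuclideanSpace ℝ (Fin n) => q.1 * q.2 k) :=
          measurable_fst.mul ((hmcoord k).comp measurable_snd)
        exact (hindep.indepFun hij).comp hm hm
      have := hI.integral_mul_eq_mul_integral
        ((hθmeas i).mul ((hmcoord k).comp (hGmeas i))).aestronglyMeasurable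
        ((hθmeas j).mul ((hmcoord k).comp (hGmeas j))).aestronglyMeasurable
      rw [show (fun ω => (θ i ω * G i ω k) * (θ j ω * G j ω k))
          = (fun ω => θ i ω * G i ω k) * (fun ω => θ j ω * G j ω k) from rfl, this,
        hgcoord i k, hgcoord j k]
    rw [Finset.sum_congr rfl fun k _ => hcoord k, PiLp.inner_apply]
    simp only [RCLike.inner_apply, conj_trivial]
    rw [Finset.mul_sum]
    exact Finset.sum_congr rfl fun k _ => by ring
  -- diagonal bound
  have hGmeansub : ∀ i, ∫ ω, (G i ω - v i) ∂μ = 0 := by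
    intro i
    rw [integral_sub (hGint i) (integrable_const _), integral_const]
    simp [hGmean i, hv]
  have hGsubint : ∀ i, Integrable (fun ω => G i ω - v i) μ :=
    fun i => (hGint i).sub (integrable_const _)
  have hinner0 : ∀ i, ∫ ω, (inner ℝ (v i) (G i ω - v i) : ℝ) ∂μ = 0 := by
    intro i
    have := (innerSL ℝ (v i)).integral_comp_comm (hGsubint i)
    simp only [innerSL_apply_apply] at this
    rw [this, hGmeansub i, inner_zero_right]
  have hGnormsq : ∀ i, ∫ ω, ‖G i ω‖ ^ 2 ∂μ ≤ (β + 1) * ‖v i‖ ^ 2 + σ ^ 2 := by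
    intro i
    have hpt : (fun ω => ‖G i ω‖ ^ 2)
        = fun ω => ‖G i ω - v i‖ ^ 2 + (2 * (inner ℝ (v i) (G i ω - v i) : ℝ) + ‖v i‖ ^ 2) := by
      funext ω
      have := norm_add_sq_real (G i ω - v i) (v i)
      simp only [sub_add_cancel] at this
      rw [this, real_inner_comm]
      ring
    have hinnerint : Integrable (fun ω => (inner ℝ (v i) (G i ω - v i) : ℝ)) μ := by
      have := (innerSL ℝ (v i)).integrable_comp (hGsubint i)
      simpa [innerSL_apply_apply] using this
    have h3 : Integrable (fun ω => 2 * (inner ℝ (v i) (G i ω - v i) : ℝ)) μ :=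
      hinnerint.const_mul 2
    have h4 : Integrable (fun ω => 2 * (inner ℝ (v i) (G i ω - v i) : ℝ) + ‖v i‖ ^ 2) μ :=
      h3.add (integrable_const _)
    rw [hpt, integral_add (hGsqint' i) h4, integral_add h3 (integrable_const _),
      integral_const_mul, hinner0 i, integral_const]
    simp only [measure_univ, probReal_univ, ENNReal.toReal_one, one_smul, mul_zero, zero_add, smul_eq_mul,
      one_mul]
    have := hGvar' i
    linarith
  have hdiag : ∀ i, ∫ ω, ‖g i ω‖ ^ 2 ∂μ ≤ p i * ((β + 1) * ‖v i‖ ^ 2 + σ ^ 2) := by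
    intro i
    have hpt : (fun ω => ‖g i ω‖ ^ 2) = (θ i) * (fun ω => ‖G i ω‖ ^ 2) := by
      funext ω
      rw [hg]
      simp only [Pi.mul_apply, norm_smul, Real.norm_eq_abs, mul_pow, sq_abs, hθsq i ω]
    have hI : IndepFun (θ i) (fun ω => ‖G i ω‖ ^ 2) μ :=
      (hpair i).comp measurable_id (measurable_norm.pow_const 2)
    rw [hpt, hI.integral_mul_eq_mul_integral (hθmeas i).aestronglyMeasurable
      ((hGmeas i).norm.pow_const 2).aestronglyMeasurable, hθmean i]
    exact mul_le_mul_of_nonneg_left (hGnormsq i) (hp i).1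
  -- expansion of the square norm
  have hexpand : ∀ (c : Fin N → ℝ) (w : Fin N → EuclideanSpace ℝ (Fin n)),
      ‖∑ i, c i • w i‖ ^ 2 = ∑ i, ∑ j, (c i * c j) * (inner ℝ (w i) (w j) : ℝ) := by
    intro c w
    rw [← real_inner_self_eq_norm_sq]
    rw [sum_inner]
    refine Finset.sum_congr rfl fun i _ => ?_
    rw [inner_sum]
    refine Finset.sum_congr rfl fun j _ => ?_
    rw [real_inner_smul_left, real_inner_smul_right]
    ring
  have hsplit : ∫ ω, ‖∑ i, a i • g i ω‖ ^ 2 ∂μ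
      = ∑ i, ∑ j, (a i * a j) * ∫ ω, (inner ℝ (g i ω) (g j ω) : ℝ) ∂μ := by
    have h1 : (fun ω => ‖∑ i, a i • g i ω‖ ^ 2)
        = fun ω => ∑ i, ∑ j, (a i * a j) * (inner ℝ (g i ω) (g j ω) : ℝ) := by
      funext ω
      exact hexpand a (fun i => g i ω)
    rw [h1, integral_finset_sum _ fun i _ =>
      integrable_finset_sum _ fun j _ => (hginnerint i j).const_mul _]
    refine Finset.sum_congr rfl fun i _ => ?_
    rw [integral_finset_sum _ fun j _ => (hginnerint i j).const_mul _]
    exact Finset.sum_congr rfl fun j _ => integral_const_mul _ _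
  -- key double-sum identity
  set I : Fin N → ℝ := fun i => ∫ ω, ‖g i ω‖ ^ 2 ∂μ with hI
  have hterm : ∀ i j, (a i * a j) * (∫ ω, (inner ℝ (g i ω) (g j ω) : ℝ) ∂μ)
      = (if j = i then (a i) ^ 2 * (I i - (p i) ^ 2 * ‖v i‖ ^ 2) else 0)
        + ((a i * p i) * (a j * p j)) * (inner ℝ (v i) (v j) : ℝ) := by
    intro i j
    by_cases h : j = i
    · subst h
      rw [if_pos rfl]
      have hIeq : ∫ ω, (inner ℝ (g j ω) (g j ω) : ℝ) ∂μ = I j := by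
        rw [hI]
        refine congrArg _ (funext fun ω => ?_)
        exact real_inner_self_eq_norm_sq _
      rw [hIeq, real_inner_self_eq_norm_sq]
      ring
    · rw [if_neg h, hoff i j (fun hh => h hh.symm)]
      ring
  have hkey : ∑ i, ∑ j, (a i * a j) * (∫ ω, (inner ℝ (g i ω) (g j ω) : ℝ) ∂μ)
      = (∑ i, (a i) ^ 2 * (I i - (p i) ^ 2 * ‖v i‖ ^ 2)) + ‖∑ i, (a i * p i) • v i‖ ^ 2 := by
    rw [Finset.sum_congr rfl fun i _ => Finset.sum_congr rfl fun j _ => hterm i j]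
    rw [hexpand (fun i => a i * p i) v]
    calc ∑ i, ∑ j, ((if j = i then (a i) ^ 2 * (I i - (p i) ^ 2 * ‖v i‖ ^ 2) else 0)
            + ((a i * p i) * (a j * p j)) * (inner ℝ (v i) (v j) : ℝ))
        = ∑ i, ((∑ j, if j = i then (a i) ^ 2 * (I i - (p i) ^ 2 * ‖v i‖ ^ 2) else 0)
            + ∑ j, ((a i * p i) * (a j * p j)) * (inner ℝ (v i) (v j) : ℝ)) :=
          Finset.sum_congr rfl fun i _ => Finset.sum_add_distrib
      _ = ∑ i, ((a i) ^ 2 * (I i - (p i) ^ 2 * ‖v i‖ ^ 2)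
            + ∑ j, ((a i * p i) * (a j * p j)) * (inner ℝ (v i) (v j) : ℝ)) := by
          refine Finset.sum_congr rfl fun i _ => ?_
          rw [Finset.sum_ite_eq' Finset.univ i
            (fun _ => (a i) ^ 2 * (I i - (p i) ^ 2 * ‖v i‖ ^ 2))]
          simp
      _ = (∑ i, (a i) ^ 2 * (I i - (p i) ^ 2 * ‖v i‖ ^ 2))
            + ∑ i, ∑ j, ((a i * p i) * (a j * p j)) * (inner ℝ (v i) (v j) : ℝ) :=
          Finset.sum_add_distrib
  -- Cauchy-Schwarz bound on the mean part
  have hCS : ‖∑ i, (a i * p i) • v i‖ ^ 2 ≤ ∑ i, a i * ((p i) ^ 2 * ‖v i‖ ^ 2) := by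
    have h1 : ‖∑ i, (a i * p i) • v i‖ ≤ ∑ i, a i * (p i * ‖v i‖) := by
      refine (norm_sum_le _ _).trans (le_of_eq ?_)
      refine Finset.sum_congr rfl fun i _ => ?_
      rw [norm_smul, Real.norm_eq_abs, abs_of_nonneg (mul_nonneg (hapos i).le (hp i).1)]
      ring
    have h2 : (∑ i, a i * (p i * ‖v i‖)) ^ 2 ≤ ∑ i, a i * ((p i) ^ 2 * ‖v i‖ ^ 2) := by
      have := Finset.sum_mul_sq_le_sq_mul_sq Finset.univ
        (fun i => Real.sqrt (a i)) (fun i => Real.sqrt (a i) * (p i * ‖v i‖))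
      have e1 : ∀ i : Fin N, Real.sqrt (a i) * (Real.sqrt (a i) * (p i * ‖v i‖))
          = a i * (p i * ‖v i‖) := by
        intro i
        rw [← mul_assoc, Real.mul_self_sqrt (hapos i).le]
      have e2 : ∀ i : Fin N, Real.sqrt (a i) ^ 2 = a i := fun i => Real.sq_sqrt (hapos i).le
      have e3 : ∀ i : Fin N, (Real.sqrt (a i) * (p i * ‖v i‖)) ^ 2
          = a i * ((p i) ^ 2 * ‖v i‖ ^ 2) := by
        intro i
        rw [mul_pow, Real.sq_sqrt (hapos i).le]
        ring
      rw [Finset.sum_congr rfl fun i _ => e1 i, Finset.sum_congr rfl fun i _ => e2 i,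
        Finset.sum_congr rfl fun i _ => e3 i, hasum, one_mul] at this
      exact this
    calc ‖∑ i, (a i * p i) • v i‖ ^ 2 ≤ (∑ i, a i * (p i * ‖v i‖)) ^ 2 := by
          apply pow_le_pow_left₀ (norm_nonneg _) h1
      _ ≤ ∑ i, a i * ((p i) ^ 2 * ‖v i‖ ^ 2) := h2
  -- combine
  have hdiagsum : ∑ i, (a i) ^ 2 * (I i - (p i) ^ 2 * ‖v i‖ ^ 2)
      ≤ (∑ i, (a i) ^ 2 * (p i * (β + 1) - (p i) ^ 2) * ‖v i‖ ^ 2)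
        + σ ^ 2 * ∑ i, (a i) ^ 2 * p i := by
    rw [Finset.mul_sum, ← Finset.sum_add_distrib]
    refine Finset.sum_le_sum fun i _ => ?_
    have h1 : I i ≤ p i * ((β + 1) * ‖v i‖ ^ 2 + σ ^ 2) := hdiag i
    have h2 : (0 : ℝ) ≤ (a i) ^ 2 := sq_nonneg _
    nlinarith [sq_nonneg (a i)]
  rw [hsplit, hkey]
  have hfinal : (∑ i, (a i) ^ 2 * (p i * (β + 1) - (p i) ^ 2) * ‖v i‖ ^ 2)
      + σ ^ 2 * (∑ i, (a i) ^ 2 * p i) + ∑ i, a i * ((p i) ^ 2 * ‖v i‖ ^ 2)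
      = (∑ i, ((a i) ^ 2 * (p i * (β + 1) - (p i) ^ 2) + a i * (p i) ^ 2) * ‖v i‖ ^ 2)
        + σ ^ 2 * ∑ i, (a i) ^ 2 * p i := by
    rw [add_right_comm]
    congr 1
    rw [← Finset.sum_add_distrib]
    exact Finset.sum_congr rfl fun i _ => by ring
  linarith [hdiagsum, hCS]
end

section
/- Let x_s^(i) ∈ ℝⁿ for i = 1,…,N and s = 1,…,m, let F : ℝⁿ → ℝ be differentiable, let a ∈ ℝ^N have positive entries summing to 1 and p ∈ [0,1]^N. For each i and s, let g_s^(i) = θ_s^i · G_s^i, where the θ_s^i are Bernoulli(p_i), E[G_s^i | x_s^(i)] = ∇F(x_s^(i)), E[‖G_s^i − ∇F(x_s^(i))‖² | x_s^(i)] ≤ β‖∇F(x_s^(i))‖² + σ², each θ_s^i is independent of G_s^i, and the collections across distinct (i,s) are mutually independent given the models. Then E Σ_{i=1}^N a_i ‖ Σ_{s=1}^m ( g_s^(i) − ∇F(x_s^(i)) ) ‖² ≤ m Σ_{i=1}^N a_i (p_i(β−1)+1) Σ_{s=1}^m E‖∇F(x_s^(i))‖² + m² σ² Σ_{i=1}^N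 a_i p_i. -/
open MeasureTheory ProbabilityTheory

private lemma ptwise {n : ℕ} (c : EuclideanSpace ℝ (Fin n)) (t : ℝ)
    (v : EuclideanSpace ℝ (Fin n)) (h : t = 0 ∨ t = 1) :
    ‖t • v - c‖ ^ 2 = t * ‖v - c‖ ^ 2 + (1 - t) * ‖c‖ ^ 2 := by
  rcases h with h | h <;> subst h <;> simp

private lemma single_bound {n : ℕ} {Ω : Type} [MeasurableSpace Ω]
    (μ : Measure Ω) [IsProbabilityMeasure μ]
    (p β σ : ℝ) (hp : p ∈ Set.Icc (0 : ℝ) 1)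
    (θ : Ω → ℝ) (G : Ω → EuclideanSpace ℝ (Fin n)) (c : EuclideanSpace ℝ (Fin n))
    (hθm : Measurable θ) (hGm : Measurable G)
    (hθ01 : ∀ ω, θ ω = 0 ∨ θ ω = 1)
    (hθmean : ∫ ω, θ ω ∂μ = p)
    (hsq : Integrable (fun ω => ‖G ω - c‖ ^ 2) μ)
    (hvar : ∫ ω, ‖G ω - c‖ ^ 2 ∂μ ≤ β * ‖c‖ ^ 2 + σ ^ 2)
    (hpair : IndepFun θ G μ) :
    Integrable (fun ω => ‖θ ω • G ω - c‖ ^ 2) μ ∧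
    ∫ ω, ‖θ ω • G ω - c‖ ^ 2 ∂μ ≤ (p * (β - 1) + 1) * ‖c‖ ^ 2 + p * σ ^ 2 := by
  have hθint : Integrable θ μ := by
    refine (integrable_const (1 : ℝ)).mono' hθm.aestronglyMeasurable ?_
    filter_upwards with ω
    rcases hθ01 ω with h | h <;> simp [h]
  have hind : IndepFun θ (fun ω => ‖G ω - c‖ ^ 2) μ := by
    have : Measurable (fun v : EuclideanSpace ℝ (Fin n) => ‖v - c‖ ^ 2) := by
      measurability
    exact hpair.comp measurable_id this
  have hprod : Integrable (fun ω => θ ω * ‖G ω - c‖ ^ 2) μ :=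
    hind.integrable_mul hθint hsq
  have hmul : ∫ ω, θ ω * ‖G ω - c‖ ^ 2 ∂μ = p * ∫ ω, ‖G ω - c‖ ^ 2 ∂μ := by
    have := hind.integral_mul_eq_mul_integral hθint.aestronglyMeasurable hsq.aestronglyMeasurable
    simpa [hθmean] using this
  have heq : (fun ω => ‖θ ω • G ω - c‖ ^ 2)
      = fun ω => θ ω * ‖G ω - c‖ ^ 2 + (1 - θ ω) * ‖c‖ ^ 2 := by
    funext ω; exact ptwise c (θ ω) (G ω) (hθ01 ω)
  have hrest : Integrable (fun ω => (1 - θ ω) * ‖c‖ ^ 2) μ :=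
    ((integrable_const (1 : ℝ)).sub hθint).mul_const _
  have hint : Integrable (fun ω => ‖θ ω • G ω - c‖ ^ 2) μ := by
    rw [heq]; exact hprod.add hrest
  refine ⟨hint, ?_⟩
  have hval : ∫ ω, ‖θ ω • G ω - c‖ ^ 2 ∂μ
      = p * ∫ ω, ‖G ω - c‖ ^ 2 ∂μ + (1 - p) * ‖c‖ ^ 2 := by
    rw [heq, integral_add hprod hrest, hmul]
    congr 1
    rw [integral_mul_const]
    congr 1
    rw [integral_sub (integrable_const 1) hθint, hθmean]
    simp
  rw [hval]
  have hp0 : 0 ≤ p := hp.1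
  nlinarith [mul_le_mul_of_nonneg_left hvar hp0]

/-- **Accumulated stochastic-gradient noise bound (equations (144)–(148) in the proof
of Theorem 1 of the paper).**
For a block of `m` iterations with fixed models `x i s`, Bernoulli(`p i`)-masked
unbiased gradients `g s i = θ i s • G i s` with variance bound
`E‖G i s − ∇F(x i s)‖² ≤ β‖∇F(x i s)‖² + σ²`, mutually independent across `(i, s)`:
`E ∑ i a i ‖∑ s (g s i − ∇F(x i s))‖²
  ≤ m ∑ i a i (p i(β−1)+1) ∑ s ‖∇F(x i s)‖² + m² σ² ∑ i a i p i`. -/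
theorem stmt_17 {n N m : ℕ} {Ω : Type} [MeasurableSpace Ω]
    (μ : Measure Ω) [IsProbabilityMeasure μ]
    (F : EuclideanSpace ℝ (Fin n) → ℝ) (hF : Differentiable ℝ F)
    (x : Fin N → Fin m → EuclideanSpace ℝ (Fin n))
    (a p : Fin N → ℝ) (hapos : ∀ i, 0 < a i) (hasum : ∑ i, a i = 1)
    (hp : ∀ i, p i ∈ Set.Icc (0 : ℝ) 1)
    (β σ : ℝ) (hβ : 0 ≤ β) (hσ : 0 ≤ σ)
    (θ : Fin N → Fin m → Ω → ℝ) (G : Fin N → Fin m → Ω → EuclideanSpace ℝ (Fin n))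
    (hθmeas : ∀ i s, Measurable (θ i s)) (hGmeas : ∀ i s, Measurable (G i s))
    (hθ01 : ∀ i s ω, θ i s ω = 0 ∨ θ i s ω = 1)
    (hθmean : ∀ i s, ∫ ω, θ i s ω ∂μ = p i)
    (hGint : ∀ i s, Integrable (G i s) μ)
    (hGmean : ∀ i s, ∫ ω, G i s ω ∂μ = gradient F (x i s))
    (hGsqint : ∀ i s, Integrable (fun ω => ‖G i s ω - gradient F (x i s)‖ ^ 2) μ)
    (hGvar : ∀ i s, ∫ ω, ‖G i s ω - gradient F (x i s)‖ ^ 2 ∂μ ≤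
      β * ‖gradient F (x i s)‖ ^ 2 + σ ^ 2)
    (hpair : ∀ i s, IndepFun (θ i s) (G i s) μ)
    (hindep : iIndepFun
      (fun (is : Fin N × Fin m) ω => (θ is.1 is.2 ω, G is.1 is.2 ω)) μ) :
    ∫ ω, ∑ i, a i * ‖∑ s, (θ i s ω • G i s ω - gradient F (x i s))‖ ^ 2 ∂μ ≤
      (m : ℝ) * ∑ i, a i * (p i * (β - 1) + 1) * (∑ s, ‖gradient F (x i s)‖ ^ 2)
        + (m : ℝ) ^ 2 * σ ^ 2 * ∑ i, a i * p i := by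
  set c : Fin N → Fin m → EuclideanSpace ℝ (Fin n) := fun i s => gradient F (x i s) with hc
  -- per-term bounds
  have hterm : ∀ i s, Integrable (fun ω => ‖θ i s ω • G i s ω - c i s‖ ^ 2) μ ∧
      ∫ ω, ‖θ i s ω • G i s ω - c i s‖ ^ 2 ∂μ
        ≤ (p i * (β - 1) + 1) * ‖c i s‖ ^ 2 + p i * σ ^ 2 := fun i s =>
    single_bound μ (p i) β σ (hp i) (θ i s) (G i s) (c i s) (hθmeas i s) (hGmeas i s)
      (hθ01 i s) (hθmean i s) (hGsqint i s) (hGvar i s) (hpair i s)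
  -- pointwise Cauchy-Schwarz bound
  have hpt : ∀ i ω, ‖∑ s, (θ i s ω • G i s ω - c i s)‖ ^ 2
      ≤ (m : ℝ) * ∑ s, ‖θ i s ω • G i s ω - c i s‖ ^ 2 := by
    intro i ω
    calc ‖∑ s, (θ i s ω • G i s ω - c i s)‖ ^ 2
        ≤ (∑ s, ‖θ i s ω • G i s ω - c i s‖) ^ 2 := by
          apply pow_le_pow_left₀ (norm_nonneg _) (norm_sum_le _ _)
      _ ≤ (m : ℝ) * ∑ s, ‖θ i s ω • G i s ω - c i s‖ ^ 2 := by
          simpa using sq_sum_le_card_mul_sum_sq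
            (s := (Finset.univ : Finset (Fin m)))
            (f := fun s => ‖θ i s ω • G i s ω - c i s‖)
  have hboundint : ∀ i, Integrable
      (fun ω => (m : ℝ) * ∑ s, ‖θ i s ω • G i s ω - c i s‖ ^ 2) μ := fun i =>
    (integrable_finset_sum _ (fun s _ => (hterm i s).1)).const_mul _
  -- integrability of the squared norm of the sum
  have hfint : ∀ i, Integrable
      (fun ω => ‖∑ s, (θ i s ω • G i s ω - c i s)‖ ^ 2) μ := by
    intro i
    refine (hboundint i).mono' ?_ ?_
    · apply Measurable.aestronglyMeasurable
      have : Measurable (fun ω => ∑ s, (θ i s ω • G i s ω - c i s)) :=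
        Finset.measurable_sum _ (fun s _ => ((hθmeas i s).smul (hGmeas i s)).sub measurable_const)
      exact (this.norm.pow_const 2)
    · filter_upwards with ω
      rw [Real.norm_eq_abs, abs_of_nonneg (by positivity)]
      exact hpt i ω
  -- bound each i-block integral
  have hblock : ∀ i, ∫ ω, ‖∑ s, (θ i s ω • G i s ω - c i s)‖ ^ 2 ∂μ
      ≤ (m : ℝ) * (p i * (β - 1) + 1) * (∑ s, ‖c i s‖ ^ 2)
        + (m : ℝ) ^ 2 * σ ^ 2 * p i := by
    intro i
    have h1 : ∫ ω, ‖∑ s, (θ i s ω • G i s ω - c i s)‖ ^ 2 ∂μ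
        ≤ ∫ ω, (m : ℝ) * ∑ s, ‖θ i s ω • G i s ω - c i s‖ ^ 2 ∂μ :=
      integral_mono (hfint i) (hboundint i) (fun ω => hpt i ω)
    have h2 : ∫ ω, (m : ℝ) * ∑ s, ‖θ i s ω • G i s ω - c i s‖ ^ 2 ∂μ
        = (m : ℝ) * ∑ s, ∫ ω, ‖θ i s ω • G i s ω - c i s‖ ^ 2 ∂μ := by
      rw [integral_const_mul, integral_finset_sum _ (fun s _ => (hterm i s).1)]
    have h3 : (m : ℝ) * ∑ s, ∫ ω, ‖θ i s ω • G i s ω - c i s‖ ^ 2 ∂μ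
        ≤ (m : ℝ) * ∑ s, ((p i * (β - 1) + 1) * ‖c i s‖ ^ 2 + p i * σ ^ 2) := by
      apply mul_le_mul_of_nonneg_left _ (Nat.cast_nonneg m)
      exact Finset.sum_le_sum (fun s _ => (hterm i s).2)
    have h4 : (m : ℝ) * ∑ s, ((p i * (β - 1) + 1) * ‖c i s‖ ^ 2 + p i * σ ^ 2)
        = (m : ℝ) * (p i * (β - 1) + 1) * (∑ s, ‖c i s‖ ^ 2)
          + (m : ℝ) ^ 2 * σ ^ 2 * p i := by
      rw [Finset.sum_add_distrib, Finset.sum_const, ← Finset.mul_sum]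
      simp [Finset.card_univ]
      ring
    linarith
  -- assemble
  have hswap : ∫ ω, ∑ i, a i * ‖∑ s, (θ i s ω • G i s ω - c i s)‖ ^ 2 ∂μ
      = ∑ i, a i * ∫ ω, ‖∑ s, (θ i s ω • G i s ω - c i s)‖ ^ 2 ∂μ := by
    rw [integral_finset_sum _ (fun i _ => (hfint i).const_mul _)]
    exact Finset.sum_congr rfl (fun i _ => integral_const_mul _ _)
  rw [hswap]
  have hRHS : (m : ℝ) * ∑ i, a i * (p i * (β - 1) + 1) * (∑ s, ‖c i s‖ ^ 2)
        + (m : ℝ) ^ 2 * σ ^ 2 * ∑ i, a i * p i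
      = ∑ i, a i * ((m : ℝ) * (p i * (β - 1) + 1) * (∑ s, ‖c i s‖ ^ 2)
          + (m : ℝ) ^ 2 * σ ^ 2 * p i) := by
    rw [Finset.mul_sum, Finset.mul_sum, ← Finset.sum_add_distrib]
    exact Finset.sum_congr rfl (fun i _ => by ring)
  rw [hRHS]
  exact Finset.sum_le_sum (fun i _ =>
    mul_le_mul_of_nonneg_left (hblock i) (hapos i).le)
end
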